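/- Any two 2×2 upper triangular tropical matrices A and B satisfy the semigroup identity A·B²·A · A·B · A·B²·A = A·B²·A · B·A · A·B²·A, i.e., setting M = A·B·B·A one has M·(A·B)·M = M·(B·A)·M. -/

import Mathlib

/-- The max-plus tropical semiring `𝕋 = ℝ ∪ {-∞}`, realized as `Tropical (WithTop ℝᵒᵈ)`:
tropical addition is `max`, tropical multiplication is `+`, and `⊤` corresponds to `-∞`. -/
abbrev Trop : Type := Tropical (WithTop ℝᵒᵈ)

lemma trip {R : Type*} [AddCommGroup R] [LinearOrder R] [IsOrderedAddMonoid R] (x y u : Tropical (WithTop R))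
    (h : u * u * u = x * y * y) : x + y + u = x + y := by
  rcases le_or_gt (x + y) u with hle | hlt
  · exact Tropical.add_eq_left hle
  · exfalso
    have hmin : Tropical.untrop u < min (Tropical.untrop x) (Tropical.untrop y) := by
      have := (Tropical.untrop_lt_iff (x := u) (y := x + y)).2 hlt
      simpa [Tropical.untrop_add] using this
    have hux := lt_of_lt_of_le hmin (min_le_left _ _)
    have huy := lt_of_lt_of_le hmin (min_le_right _ _)
    have h3 : Tropical.untrop u + Tropical.untrop u + Tropical.untrop u =
        Tropical.untrop x + Tropical.untrop y + Tropical.untrop y := by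
      have := congrArg Tropical.untrop h
      simpa [Tropical.untrop_mul] using this
    have hu : Tropical.untrop u ≠ ⊤ := hux.ne_top
    have hxyy : Tropical.untrop x + Tropical.untrop y + Tropical.untrop y ≠ ⊤ := by
      rw [← h3]; simp [WithTop.add_ne_top, hu]
    have hx : Tropical.untrop x ≠ ⊤ := by intro hh; rw [hh] at hxyy; simp at hxyy
    have hy : Tropical.untrop y ≠ ⊤ := by intro hh; rw [hh] at hxyy; simp at hxyy
    lift Tropical.untrop u to R using hu with u' hu'
    lift Tropical.untrop x to R using hx with x' hx'
    lift Tropical.untrop y to R using hy with y' hy'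
    rw [← WithTop.coe_add, ← WithTop.coe_add, ← WithTop.coe_add, ← WithTop.coe_add,
      WithTop.coe_eq_coe] at h3
    rw [WithTop.coe_lt_coe] at hux huy
    exact absurd h3 (ne_of_lt (add_lt_add (add_lt_add hux huy) huy))

lemma key (a b c d e f : Trop) :
    a*d*e*f^3*c^4 + a*d^2*b*f^3*c^3 + a*e*f^4*c^4 + a^2*d^2*b*f^3*c^2 + a^3*d^2*e*f^2*c^2
      + a^3*d^3*b*f^2*c + a^4*d^3*e*f*c + a^4*d^4*e*c + a^4*d^5*b + b*f^5*c^4 =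
    a*d*e*f^3*c^4 + a*d^2*b*f^3*c^3 + a*e*f^4*c^4 + a^2*d^2*e*f^2*c^3 + a^2*d^3*b*f^2*c^2
      + a^3*d^3*b*f^2*c + a^4*d^3*e*f*c + a^4*d^4*e*c + a^4*d^5*b + b*f^5*c^4 := by
  set s1 := b*c^4*f^5
  set s2 := a*c^4*e*f^4
  set s3 := a*c^4*d*e*f^3
  set s4 := a*b*c^3*d^2*f^3
  set s7 := a^3*b*c*d^3*f^2
  set s8 := a^4*c*d^3*e*f
  set s9 := a^4*c*d^4*e
  set s10 := a^4*b*d^5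
  set u1 := a^3*c^2*d^2*e*f^2
  set u2 := a^2*b*c^2*d^2*f^3
  set v1 := a^2*c^3*d^2*e*f^2
  set v2 := a^2*b*c^2*d^3*f^2
  have h1 : s2 + s8 + u1 = s2 + s8 := trip _ _ _ (by simp only [s2, s8, u1]; ring)
  have h2 : s1 + s7 + u2 = s1 + s7 := trip _ _ _ (by simp only [s1, s7, u2]; ring)
  have h3 : s9 + s3 + v1 = s9 + s3 := trip _ _ _ (by simp only [s9, s3, v1]; ring)
  have h4 : s10 + s4 + v2 = s10 + s4 := trip _ _ _ (by simp only [s10, s4, v2]; ring)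
  calc a*d*e*f^3*c^4 + a*d^2*b*f^3*c^3 + a*e*f^4*c^4 + a^2*d^2*b*f^3*c^2 + a^3*d^2*e*f^2*c^2
      + a^3*d^3*b*f^2*c + a^4*d^3*e*f*c + a^4*d^4*e*c + a^4*d^5*b + b*f^5*c^4
      = (s2 + s8 + u1) + ((s1 + s7 + u2) + (s3 + s4 + (s9 + s10))) := by
        simp only [s1, s2, s3, s4, s7, s8, s9, s10, u1, u2]; ring
    _ = (s2 + s8) + ((s1 + s7) + (s3 + s4 + (s9 + s10))) := by rw [h1, h2]
    _ = (s9 + s3) + ((s10 + s4) + (s1 + s2 + (s7 + s8))) := by ring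
    _ = (s9 + s3 + v1) + ((s10 + s4 + v2) + (s1 + s2 + (s7 + s8))) := by rw [h3, h4]
    _ = _ := by
        simp only [s1, s2, s3, s4, s7, s8, s9, s10, v1, v2]; ring

/-- any two upper triangular `2 × 2` tropical matrices satisfy the identity
`AB²A · AB · AB²A = AB²A · BA · AB²A`. -/
theorem two_by_two_triangular_identity (A B : Matrix (Fin 2) (Fin 2) Trop)
    (hA : ∀ i j : Fin 2, j < i → A i j = 0)
    (hB : ∀ i j : Fin 2, j < i → B i j = 0) :
    (A * B * B * A) * (A * B) * (A * B * B * A) =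
      (A * B * B * A) * (B * A) * (A * B * B * A) := by
  have hA10 : A 1 0 = 0 := hA 1 0 (by decide)
  have hB10 : B 1 0 = 0 := hB 1 0 (by decide)
  rw [Matrix.eta_fin_two A, Matrix.eta_fin_two B, hA10, hB10]
  set a := A 0 0; set b := A 0 1; set c := A 1 1
  set d := B 0 0; set e := B 0 1; set f := B 1 1
  simp only [Matrix.mul_fin_two, mul_zero, zero_mul, add_zero, zero_add]
  ext i j
  fin_cases i <;> fin_cases j <;> simp
  all_goals try ring
  calc _ = a*d*e*f^3*c^4 + a*d^2*b*f^3*c^3 + a*e*f^4*c^4 + a^2*d^2*b*f^3*c^2 + a^3*d^2*e*f^2*c^2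
      + a^3*d^3*b*f^2*c + a^4*d^3*e*f*c + a^4*d^4*e*c + a^4*d^5*b + b*f^5*c^4 := by ring
    _ = a*d*e*f^3*c^4 + a*d^2*b*f^3*c^3 + a*e*f^4*c^4 + a^2*d^2*e*f^2*c^3 + a^2*d^3*b*f^2*c^2
      + a^3*d^3*b*f^2*c + a^4*d^3*e*f*c + a^4*d^4*e*c + a^4*d^5*b + b*f^5*c^4 := key a b c d e f
    _ = _ := by ring
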